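/- If there exists X = Xᵀ > 0 with F_cᵀX + XF_c + XG_cG_cᵀX + H_cᵀH_c ≤ 0 and F_c Hurwitz, then ‖H_c(sI - F_c)⁻¹ G_c‖_∞ ≤ 1. -/

import Mathlib

open Matrix ComplexOrder

private lemma dot_conjT {a b : ℕ} (A : Matrix (Fin a) (Fin b) ℂ) (x : Fin b → ℂ)
    (y : Fin a → ℂ) : star x ⬝ᵥ (Aᴴ *ᵥ y) = star (A *ᵥ x) ⬝ᵥ y := by
  rw [star_mulVec, ← dotProduct_mulVec]

private lemma mapC_mul {a b c : ℕ} (M : Matrix (Fin a) (Fin b) ℝ) (N : Matrix (Fin b) (Fin c) ℝ) :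
    (M * N).map Complex.ofReal = M.map Complex.ofReal * N.map Complex.ofReal := by
  ext i j
  simp [Matrix.mul_apply, Matrix.map_apply]

private lemma mapC_conjT {a b : ℕ} (M : Matrix (Fin a) (Fin b) ℝ) :
    (Mᵀ).map Complex.ofReal = (M.map Complex.ofReal)ᴴ := by
  ext i j
  simp [Matrix.conjTranspose_apply, Matrix.map_apply, Complex.conj_ofReal]

private lemma map_psd {k : ℕ} {M : Matrix (Fin k) (Fin k) ℝ} (h : M.PosSemidef) :
    (M.map Complex.ofReal).PosSemidef := by
  obtain ⟨B, rfl⟩ : ∃ B : Matrix (Fin k) (Fin k) ℝ, M = Bᴴ * B := by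
    open scoped MatrixOrder in exact CStarAlgebra.nonneg_iff_eq_star_mul_self.mp h.nonneg
  rw [mapC_mul]
  have : (Bᴴ : Matrix (Fin k) (Fin k) ℝ) = Bᵀ := rfl
  rw [this, mapC_conjT]
  exact Matrix.posSemidef_conjTranspose_mul_self _

theorem stmt_15 (n m p : ℕ)
    (Fc : Matrix (Fin n) (Fin n) ℝ) (Gc : Matrix (Fin n) (Fin m) ℝ)
    (Hc : Matrix (Fin p) (Fin n) ℝ)
    (hFc : ∀ μ ∈ spectrum ℂ (Fc.map (Complex.ofReal)), μ.re < 0)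
    (X : Matrix (Fin n) (Fin n) ℝ) (hXsym : Xᵀ = X) (hX : X.PosDef)
    (hLMI : (-(Fcᵀ * X + X * Fc + X * Gc * Gcᵀ * X + Hcᵀ * Hc)).PosSemidef) :
    ∀ ω : ℝ,
      ((1 : Matrix (Fin m) (Fin m) ℂ) -
        ((Hc.map Complex.ofReal) * ((Complex.I * ω) • 1 - Fc.map Complex.ofReal)⁻¹ *
          (Gc.map Complex.ofReal))ᴴ *
        ((Hc.map Complex.ofReal) * ((Complex.I * ω) • 1 - Fc.map Complex.ofReal)⁻¹ *
          (Gc.map Complex.ofReal))).PosSemidef := by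
  intro ω
  set A := Fc.map Complex.ofReal with hA
  set G := Gc.map Complex.ofReal with hG
  set H := Hc.map Complex.ofReal with hH
  set Xc := X.map Complex.ofReal with hXc
  set s : ℂ := Complex.I * ω with hs
  set S : Matrix (Fin n) (Fin n) ℂ := s • 1 - A with hS
  -- S is invertible
  have hSunit : IsUnit S := by
    by_contra h
    have hmem : s ∈ spectrum ℂ A := by
      rw [spectrum.mem_iff, Algebra.algebraMap_eq_smul_one, ← hS]
      exact h
    have := hFc s hmem
    simp [hs, Complex.mul_re] at this
  have hdet : IsUnit S.det := S.isUnit_iff_isUnit_det.mp hSunit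
  have hSS : S * S⁻¹ = 1 := Matrix.mul_nonsing_inv _ hdet
  -- Hermitian part
  have hXcH : Xcᴴ = Xc := by
    rw [hXc, ← mapC_conjT X, hXsym]
  refine Matrix.PosSemidef.of_dotProduct_mulVec_nonneg ((Matrix.isHermitian_one).sub (Matrix.isHermitian_conjTranspose_mul_self _)) ?_
  intro u
  set g := G *ᵥ u with hg
  set x := S⁻¹ *ᵥ g with hxdef
  have hSx : S *ᵥ x = g := by
    rw [hxdef, mulVec_mulVec, hSS, one_mulVec]
  have hAx : A *ᵥ x = s • x - g := by
    rw [← hSx, hS, sub_mulVec, smul_mulVec, one_mulVec]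
    abel
  set y := Xc *ᵥ x with hy
  set v := Gᴴ *ᵥ y with hv
  set w := H *ᵥ x with hw
  set c := star u ⬝ᵥ v with hc
  -- complexified LMI
  have hpsd := map_psd hLMI
  have hmap : (-(Fcᵀ * X + X * Fc + X * Gc * Gcᵀ * X + Hcᵀ * Hc)).map Complex.ofReal
      = -(Aᴴ * Xc + Xc * A + Xc * G * Gᴴ * Xc + Hᴴ * H) := by
    have h1 : (-(Fcᵀ * X + X * Fc + X * Gc * Gcᵀ * X + Hcᵀ * Hc)).map Complex.ofReal
        = -((Fcᵀ * X).map Complex.ofReal + (X * Fc).map Complex.ofReal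
            + (X * Gc * Gcᵀ * X).map Complex.ofReal + (Hcᵀ * Hc).map Complex.ofReal) := by
      ext i j
      simp [Matrix.map_apply]
    rw [h1, mapC_mul, mapC_mul, mapC_mul, mapC_mul, mapC_mul, mapC_mul,
      mapC_conjT, mapC_conjT, mapC_conjT]
  have hkey := hpsd.dotProduct_mulVec_nonneg x
  rw [hmap] at hkey
  -- rewrite the quadratic form
  have hterm : star x ⬝ᵥ ((Aᴴ * Xc + Xc * A + Xc * G * Gᴴ * Xc + Hᴴ * H) *ᵥ x)
      = -(c + star c) + star v ⬝ᵥ v + star w ⬝ᵥ w := by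
    have t1 : star x ⬝ᵥ ((Aᴴ * Xc) *ᵥ x) = star (A *ᵥ x) ⬝ᵥ y := by
      rw [← mulVec_mulVec, dot_conjT, hy]
    have t2 : star x ⬝ᵥ ((Xc * A) *ᵥ x) = star y ⬝ᵥ (A *ᵥ x) := by
      rw [← mulVec_mulVec]
      conv_lhs => rw [← hXcH]
      rw [dot_conjT, hy]
    have t3 : star x ⬝ᵥ ((Xc * G * Gᴴ * Xc) *ᵥ x) = star v ⬝ᵥ v := by
      have hB : Xc * G * Gᴴ * Xc = (Gᴴ * Xc)ᴴ * (Gᴴ * Xc) := by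
        rw [conjTranspose_mul, conjTranspose_conjTranspose, hXcH]
        simp only [Matrix.mul_assoc]
      rw [hB, ← mulVec_mulVec, dot_conjT, ← mulVec_mulVec, ← hy, ← hv]
    have t4 : star x ⬝ᵥ ((Hᴴ * H) *ᵥ x) = star w ⬝ᵥ w := by
      rw [← mulVec_mulVec, dot_conjT, hw]
    rw [add_mulVec, add_mulVec, add_mulVec, dotProduct_add, dotProduct_add, dotProduct_add,
      t1, t2, t3, t4, hAx]
    have e1 : star (s • x - g) ⬝ᵥ y = star s * (star x ⬝ᵥ y) - star g ⬝ᵥ y := by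
      rw [star_sub, sub_dotProduct, star_smul, smul_dotProduct]
      rfl
    have e2 : star y ⬝ᵥ (s • x - g) = s * (star y ⬝ᵥ x) - star y ⬝ᵥ g := by
      rw [dotProduct_sub, dotProduct_smul]
      rfl
    have ha : star y ⬝ᵥ x = star x ⬝ᵥ y := by
      rw [hy, ← dot_conjT, hXcH]
    have hsgy : star g ⬝ᵥ y = c := by
      rw [hc, hv, dot_conjT, ← hg]
    have hyg : star y ⬝ᵥ g = star c := by
      rw [star_dotProduct, hsgy]
    have hss : star s = -s := by
      rw [hs]
      simp [Complex.ext_iff]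
    rw [e1, e2, ha, hsgy, hyg, hss]
    ring
  rw [neg_mulVec, dotProduct_neg, hterm] at hkey
  -- from hkey : 0 ≤ -(-(c + star c) + star v ⬝ᵥ v + star w ⬝ᵥ w)
  have hkey' : star w ⬝ᵥ w ≤ c + star c - star v ⬝ᵥ v := by
    have hE : -(c + star c) + star v ⬝ᵥ v + star w ⬝ᵥ w ≤ 0 := neg_nonneg.mp hkey
    calc star w ⬝ᵥ w
        = (-(c + star c) + star v ⬝ᵥ v + star w ⬝ᵥ w) + (c + star c - star v ⬝ᵥ v) := by ring
      _ ≤ 0 + (c + star c - star v ⬝ᵥ v) := add_le_add_left hE _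
      _ = c + star c - star v ⬝ᵥ v := zero_add _
  -- Cauchy-Schwarz style bound
  have hcs : (0 : ℂ) ≤ star (u - v) ⬝ᵥ (u - v) := dotProduct_star_self_nonneg _
  have hexp : star (u - v) ⬝ᵥ (u - v) = star u ⬝ᵥ u - c - star c + star v ⬝ᵥ v := by
    rw [star_sub, sub_dotProduct, dotProduct_sub, dotProduct_sub, hc]
    have : star v ⬝ᵥ u = star c := by rw [star_dotProduct, hc]
    rw [this]
    ring
  have hbound : star w ⬝ᵥ w ≤ star u ⬝ᵥ u := by
    have h2 : c + star c - star v ⬝ᵥ v ≤ star u ⬝ᵥ u := by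
      rw [hexp] at hcs
      have := add_le_add_left hcs (c + star c - star v ⬝ᵥ v)
      calc c + star c - star v ⬝ᵥ v
          = 0 + (c + star c - star v ⬝ᵥ v) := by ring
        _ ≤ (star u ⬝ᵥ u - c - star c + star v ⬝ᵥ v) + (c + star c - star v ⬝ᵥ v) := this
        _ = star u ⬝ᵥ u := by ring
    exact le_trans hkey' h2
  -- conclude
  have hTu : (H * S⁻¹ * G) *ᵥ u = w := by
    rw [← mulVec_mulVec, ← mulVec_mulVec, ← hg, ← hxdef, ← hw]
  rw [sub_mulVec, one_mulVec, dotProduct_sub, ← mulVec_mulVec, dot_conjT, hTu]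
  exact sub_nonneg.mpr hbound
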